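/- Let T be an invertible measure-class-preserving transformation of a standard probability space (X,m) and let p : (X,m) → (X̄,m̄) be a T-invariant measurable projection (p∘T = p a.e.) with disintegration m = ∫ m_{x̄} dm̄(x̄). Then for m̄-a.e. x̄ the conditional measure m_{x̄} is T-quasi-invariant and d(Tm_{x̄})/dm_{x̄}(x) = d(Tm)/dm(x) for m_{x̄}-a.e. x. -/

import Mathlib

open MeasureTheory
open scoped ENNReal

lemma countable_generatePiSystem_aux {α : Type*} {S : Set (Set α)} (hS : S.Countable) :
    (generatePiSystem S).Countable := by
  have hsub : generatePiSystem S ⊆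
      (fun t : Set (Set α) => ⋂₀ t) '' {t : Set (Set α) | t.Finite ∧ t ⊆ S} := by
    intro s hs
    induction hs with
    | base h =>
      exact ⟨{_}, ⟨Set.finite_singleton _, Set.singleton_subset_iff.2 h⟩,
        Set.sInter_singleton _⟩
    | inter h1 h2 hne ih1 ih2 =>
      obtain ⟨t1, ⟨hf1, hs1⟩, rfl⟩ := ih1
      obtain ⟨t2, ⟨hf2, hs2⟩, rfl⟩ := ih2
      exact ⟨t1 ∪ t2, ⟨hf1.union hf2, Set.union_subset hs1 hs2⟩,
        by simp [Set.sInter_union]⟩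
  exact ((Set.countable_setOf_finite_subset hS).image _).mono hsub

/-- If `T` is an invertible measure-class-preserving transformation of a standard
probability space `(X, μ)` and `p : X → Y` is a `T`-invariant projection with
disintegration `μ = ∫ m_y d(p_*μ)(y)`, then for a.e. `y` the conditional measure
`m_y` is `T`-quasi-invariant and its Radon–Nikodym derivative under `T` agrees
a.e. with that of `μ`. -/
theorem stmt_14 {X Y : Type*} [Nonempty X] [MeasurableSpace X] [StandardBorelSpace X]
    [MeasurableSpace Y] [StandardBorelSpace Y]
    (μ : Measure X) [IsProbabilityMeasure μ]
    (T : X → X) (hT : Measurable T) (hTbij : Function.Bijective T)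
    (hTinv : Measurable (Function.invFun T))
    (hqi : μ.map T ≪ μ ∧ μ ≪ μ.map T)
    (p : X → Y) (hp : Measurable p)
    (hpT : ∀ᵐ x ∂μ, p (T x) = p x)
    (m : Y → Measure X) (hm : ∀ s : Set X, MeasurableSet s → Measurable (fun y => m y s))
    (hmprob : ∀ y, IsProbabilityMeasure (m y))
    (hfiber : ∀ᵐ y ∂(μ.map p), m y (p ⁻¹' {y}) = 1)
    (hdisint : ∀ s : Set X, MeasurableSet s → μ s = ∫⁻ y, m y s ∂(μ.map p)) :
    ∀ᵐ y ∂(μ.map p),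
      ((m y).map T ≪ m y ∧ m y ≪ (m y).map T) ∧
      ∀ᵐ x ∂(m y), ((m y).map T).rnDeriv (m y) x = (μ.map T).rnDeriv μ x := by
  set f : X → ℝ≥0∞ := (μ.map T).rnDeriv μ with hf_def
  have hf : Measurable f := Measure.measurable_rnDeriv _ _
  set ν : Measure X := μ.map T with hν_def
  have hνprob : IsProbabilityMeasure ν := Measure.isProbabilityMeasure_map hT.aemeasurable
  set mb : Measure Y := μ.map p with hmb_def
  have hmbprob : IsProbabilityMeasure mb := Measure.isProbabilityMeasure_map hp.aemeasurable
  have hmeas_m : Measurable m := Measure.measurable_of_measurable_coe m hm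
  -- a.e. fiber property: m y-a.e. x satisfies p x = y
  have hfiber' : ∀ᵐ y ∂mb, ∀ᵐ x ∂(m y), p x = y := by
    filter_upwards [hfiber] with y hy
    have : m y ((p ⁻¹' {y})ᶜ) = 0 := by
      have := measure_compl (hp (measurableSet_singleton y)) (measure_ne_top (m y) _)
      rw [hy] at this
      simpa [(hmprob y).measure_univ] using this
    filter_upwards [ae_iff.2 (by simpa [Set.preimage, Set.compl_setOf] using this)] with x hx
      using hx
  -- transfer of μ-null sets to fibers
  have hae : ∀ (P : X → Prop), (∀ᵐ x ∂μ, P x) → ∀ᵐ y ∂mb, ∀ᵐ x ∂(m y), P x := by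
    intro P hP
    obtain ⟨t, hsub, htm, ht0⟩ := exists_measurable_superset_of_null (ae_iff.1 hP)
    have h0 : ∫⁻ y, m y t ∂mb = 0 := by rw [← hdisint t htm, ht0]
    have := (lintegral_eq_zero_iff (hm t htm)).1 h0
    filter_upwards [this] with y hy
    refine measure_mono_null hsub ?_
    exact le_antisymm (le_trans (measure_mono (Set.Subset.refl _)) (by simp [hy] : m y t ≤ 0))
      zero_le
  -- disintegration of lintegrals
  have hbind : μ = mb.bind m := by
    refine Measure.ext fun s hs => ?_
    rw [Measure.bind_apply hs hmeas_m.aemeasurable, hdisint s hs]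
  have hlint : ∀ (g : X → ℝ≥0∞), Measurable g →
      ∫⁻ x, g x ∂μ = ∫⁻ y, ∫⁻ x, g x ∂(m y) ∂mb := by
    intro g hg
    conv_lhs => rw [hbind]
    exact Measure.lintegral_bind hmeas_m.aemeasurable hg.aemeasurable
  -- splitting measures over fibers
  have hsplit : ∀ (u : Set X), MeasurableSet u → ∀ (A : Set Y), MeasurableSet A →
      μ (p ⁻¹' A ∩ u) = ∫⁻ y in A, m y u ∂mb := by
    intro u hu A hA
    rw [hdisint _ ((hp hA).inter hu), ← lintegral_indicator hA]
    refine lintegral_congr_ae ?_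
    filter_upwards [hfiber'] with y hy
    by_cases hyA : y ∈ A
    · have hnull : m y ((p ⁻¹' A)ᶜ) = 0 := by
        refine measure_mono_null ?_ (ae_iff.1 hy)
        intro x hx
        simp only [Set.mem_compl_iff, Set.mem_preimage] at hx ⊢
        exact fun h => hx (by rw [h]; exact hyA)
      have : m y (p ⁻¹' A ∩ u) = m y u := by
        rw [Set.inter_comm]
        exact measure_inter_conull (by simpa using hnull)
      simp [this, Set.indicator_of_mem hyA]
    · have : m y (p ⁻¹' A ∩ u) = 0 := by
        refine measure_mono_null (fun x hx => ?_) (ae_iff.1 hy)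
        simp only [Set.mem_preimage, Set.mem_inter_iff] at hx
        simp only [Set.mem_setOf_eq]
        exact fun h => hyA (h ▸ hx.1)
      simp [this, Set.indicator_of_notMem hyA]
  -- splitting lintegrals over fibers
  have hsplitInt : ∀ (g : X → ℝ≥0∞), Measurable g → ∀ (A : Set Y), MeasurableSet A →
      ∫⁻ y, ∫⁻ x, (p ⁻¹' A).indicator g x ∂(m y) ∂mb
        = ∫⁻ y in A, ∫⁻ x, g x ∂(m y) ∂mb := by
    intro g hg A hA
    rw [← lintegral_indicator hA]
    refine lintegral_congr_ae ?_
    filter_upwards [hfiber'] with y hy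
    by_cases hyA : y ∈ A
    · rw [Set.indicator_of_mem hyA]
      refine lintegral_congr_ae ?_
      filter_upwards [hy] with x hx
      rw [Set.indicator_of_mem (by simp [hx, hyA])]
    · rw [Set.indicator_of_notMem hyA]
      have : ∀ᵐ x ∂(m y), (p ⁻¹' A).indicator g x = 0 := by
        filter_upwards [hy] with x hx
        rw [Set.indicator_of_notMem (by simp [hx, hyA])]
      simp [lintegral_congr_ae this]
  -- the key per-set a.e. identity
  have hE : ∀ (s : Set X), MeasurableSet s →
      ∀ᵐ y ∂mb, m y (T ⁻¹' s) = ∫⁻ x in s, f x ∂(m y) := by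
    intro s hs
    have hgmeas : Measurable fun y => m y (T ⁻¹' s) := hm _ (hT hs)
    have hind : Measurable (s.indicator f) := hf.indicator hs
    have hhmeas : Measurable fun y => ∫⁻ x in s, f x ∂(m y) := by
      have : Measurable fun y => ∫⁻ x, s.indicator f x ∂(m y) :=
        (Measure.measurable_lintegral hind).comp hmeas_m
      simpa [lintegral_indicator hs] using this
    refine ae_eq_of_forall_setLIntegral_eq_of_sigmaFinite hgmeas hhmeas fun A hA _ => ?_
    -- LHS
    have hL : ∫⁻ y in A, m y (T ⁻¹' s) ∂mb = μ (p ⁻¹' A ∩ T ⁻¹' s) :=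
      (hsplit _ (hT hs) A hA).symm
    -- middle: change of variables
    have hmid : μ (p ⁻¹' A ∩ T ⁻¹' s) = ν (p ⁻¹' A ∩ s) := by
      rw [hν_def, Measure.map_apply hT ((hp hA).inter hs)]
      refine (measure_congr ?_).symm
      have : T ⁻¹' (p ⁻¹' A ∩ s) = (fun x => p (T x)) ⁻¹' A ∩ T ⁻¹' s := rfl
      rw [this]
      refine Filter.eventuallyEq_set.2 ?_
      filter_upwards [hpT] with x hx
      simp [Set.mem_preimage, hx]
    have hR : ν (p ⁻¹' A ∩ s) = ∫⁻ y in A, ∫⁻ x in s, f x ∂(m y) ∂mb := by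
      rw [← Measure.setLIntegral_rnDeriv hqi.1 (p ⁻¹' A ∩ s)]
      rw [← lintegral_indicator ((hp hA).inter hs)]
      have hsplit_ind : (p ⁻¹' A ∩ s).indicator f = (p ⁻¹' A).indicator (s.indicator f) := by
        ext x
        by_cases h1 : x ∈ p ⁻¹' A <;> by_cases h2 : x ∈ s <;>
          simp [Set.indicator_apply, h1, h2]
      rw [hsplit_ind, hlint _ ((hf.indicator hs).indicator (hp hA)),
        hsplitInt _ (hf.indicator hs) A hA]
      congr 1
      ext y
      rw [lintegral_indicator hs]
    rw [hL, hmid, hR]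
  -- countable π-system generating the σ-algebra
  set C : Set (Set X) := generatePiSystem (MeasurableSpace.countableGeneratingSet X) with hC_def
  have hC_count : C.Countable :=
    countable_generatePiSystem_aux (MeasurableSpace.countable_countableGeneratingSet)
  have hC_gen : MeasurableSpace.generateFrom C = ‹MeasurableSpace X› := by
    rw [hC_def, generateFrom_generatePiSystem_eq,
      MeasurableSpace.generateFrom_countableGeneratingSet]
  have hC_pi : IsPiSystem C := isPiSystem_generatePiSystem _
  have hC_meas : ∀ s ∈ C, MeasurableSet s := by
    intro s hs
    rw [← hC_gen]
    exact MeasurableSpace.measurableSet_generateFrom hs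
  have hAll : ∀ᵐ y ∂mb, ∀ s ∈ C, m y (T ⁻¹' s) = ∫⁻ x in s, f x ∂(m y) :=
    (ae_ball_iff hC_count).2 fun s hs => hE s (hC_meas s hs)
  -- positivity and finiteness of f, transferred to fibers
  have hpos_mu : ∀ᵐ x ∂μ, f x ≠ 0 := by
    have hZ : MeasurableSet {x | f x = 0} := hf (measurableSet_singleton 0)
    have hνZ : ν {x | f x = 0} = 0 := by
      rw [← Measure.setLIntegral_rnDeriv hqi.1 {x | f x = 0}]
      rw [setLIntegral_congr_fun hZ (fun x hx => hx)]
      simp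
    simp only [ae_iff, ne_eq, not_not]
    exact hqi.2 hνZ
  have hlt_mu : ∀ᵐ x ∂μ, f x ≠ ∞ := by
    filter_upwards [Measure.rnDeriv_lt_top ν μ] with x hx using hx.ne
  have hpos : ∀ᵐ y ∂mb, ∀ᵐ x ∂(m y), f x ≠ 0 := hae _ hpos_mu
  have hlt : ∀ᵐ y ∂mb, ∀ᵐ x ∂(m y), f x ≠ ∞ := hae _ hlt_mu
  -- conclude
  filter_upwards [hAll, hE Set.univ MeasurableSet.univ, hpos, hlt]
    with y h_sets h_univ hy_pos hy_lt
  haveI := hmprob y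
  have key : (m y).map T = (m y).withDensity f := by
    haveI : IsProbabilityMeasure ((m y).map T) := Measure.isProbabilityMeasure_map hT.aemeasurable
    refine ext_of_generate_finite C hC_gen.symm hC_pi (fun s hs => ?_) ?_
    · rw [Measure.map_apply hT (hC_meas s hs), withDensity_apply _ (hC_meas s hs)]
      exact h_sets s hs
    · rw [Measure.map_apply hT MeasurableSet.univ, withDensity_apply _ MeasurableSet.univ]
      simpa using h_univ
  refine ⟨⟨?_, ?_⟩, ?_⟩
  · rw [key]; exact withDensity_absolutelyContinuous _ _
  · rw [key]; exact withDensity_absolutelyContinuous' hf.aemeasurable hy_pos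
  · rw [key]; exact Measure.rnDeriv_withDensity (m y) hf
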